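/- Let k ≥ 1 be an integer and let Φ be as in the context. For every n ≥ 0 and 1 ≤ j ≤ k·2^n, sup{|Φ_{n,j}(x)| : x ∈ X_k, ‖x‖ ≤ 1} = sup{|Φ_{n,1}(x)| : x ∈ X_k, ‖x‖ ≤ 1}. -/

import Mathlib

open MeasureTheory Set ENNReal

/-- The weak `L^p` "norm": `sup { (∫_B |f| dμ) / μ(B)^(1/q) }` over measurable `B`
with `0 < μ B < ∞`, computed in `ℝ≥0∞`. -/
noncomputable def wnorm {α : Type*} [MeasurableSpace α] (q : ℝ) (μ : Measure α)
    (f : α → ℝ) : ℝ≥0∞ :=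
  ⨆ (B : Set α) (_ : MeasurableSet B ∧ 0 < μ B ∧ μ B < ⊤),
    (∫⁻ x in B, ENNReal.ofReal |f x| ∂μ) / μ B ^ (1 / q)

/-- The set `{f ≠ 0}` is σ-finite for `μ`. -/
def SigmaFinSupp {α : Type*} [MeasurableSpace α] (μ : Measure α) (f : α → ℝ) : Prop :=
  ∃ s : ℕ → Set α, {x | f x ≠ 0} ⊆ (⋃ n, s n) ∧ ∀ n, μ (s n) < ⊤

/-- Membership in the weak `L^p` space. -/
def MemW {α : Type*} [MeasurableSpace α] (q : ℝ) (μ : Measure α) (f : α → ℝ) : Prop :=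
  Measurable f ∧ SigmaFinSupp μ f ∧ wnorm q μ f < ⊤

/-- The ambient space of `X_k = (∑_{n≥0} ⊕ ℓ^{p,∞}(k·2^n))_{ℓ∞}`: all sequences
`x = (x_n)` with `x_n` a `k·2^n`-tuple of reals. -/
abbrev XFull (k : ℕ) := (n : ℕ) → Fin (k * 2 ^ n) → ℝ

/-- The norm of `X_k`: `sup_n ‖x_n‖`, where `‖·‖` is the weak `ℓ^p` norm
(counting measure on `Fin (k·2^n)`). -/
noncomputable def Xnorm (q : ℝ) (k : ℕ) (x : XFull k) : ℝ≥0∞ :=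
  ⨆ n, wnorm q (Measure.count : Measure (Fin (k * 2 ^ n))) (x n)

/-- Membership in `X_k`. -/
def MemX (q : ℝ) (k : ℕ) (x : XFull k) : Prop := Xnorm q k x < ⊤

lemma two_mul_succ_lt {k n j : ℕ} (h : j < k * 2 ^ n) : 2 * j + 1 < k * 2 ^ (n + 1) := by
  rw [pow_succ, ← mul_assoc]; omega

/-- `Z_k ⊆ X_k`: elements whose coordinate sums eventually vanish. -/
def Zset (q : ℝ) (k : ℕ) : Set (XFull k) :=
  {x | MemX q k x ∧ ∃ i : ℕ, ∀ n ≥ i, ∑ j, x n j = 0}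

/-- The element `u ∈ X_k`, `u_n(j) = (k·2^n)^{-1/p}`. -/
noncomputable def uElt (p : ℝ) (k : ℕ) : XFull k :=
  fun n _ => ((k : ℝ) * 2 ^ n) ^ (-(1 / p))

/-- Coordinatewise multiplication of `x ∈ X_k` by the indicator of a set of index pairs. -/
noncomputable def chiMul {k : ℕ} (A : (m : ℕ) → Set (Fin (k * 2 ^ m))) (x : XFull k) :
    XFull k :=
  fun m => (A m).indicator (x m)

/-- The index set `A_{n,j}` (the support of `T_k χ_{[(j-1)/2^n, j/2^n]}`): pairs `(m,i)`
such that the dyadic interval of `(m,i)` meets that of `(n,j)` in positive Lebesgue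
measure (all indices 0-indexed). -/
def Aset (k n : ℕ) (j : Fin (k * 2 ^ n)) : (m : ℕ) → Set (Fin (k * 2 ^ m)) :=
  fun m => {i | 0 < volume (Icc ((i : ℕ) / 2 ^ m : ℝ) (((i : ℕ) + 1) / 2 ^ m) ∩
    Icc ((j : ℕ) / 2 ^ n : ℝ) (((j : ℕ) + 1) / 2 ^ n))}

/-! ### Auxiliary lemmas -/

section WnormLemmas

lemma wnorm_mono {α : Type*} [MeasurableSpace α] {q : ℝ} {μ : Measure α}
    {f g : α → ℝ} (h : ∀ a, |f a| ≤ |g a|) : wnorm q μ f ≤ wnorm q μ g := by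
  refine iSup₂_mono fun B hB => ?_
  exact ENNReal.div_le_div_right (lintegral_mono fun a => ENNReal.ofReal_le_ofReal (h a)) _

lemma wnorm_congr {α : Type*} [MeasurableSpace α] {q : ℝ} {μ : Measure α}
    {f g : α → ℝ} (h : ∀ a, |f a| = |g a|) : wnorm q μ f = wnorm q μ g :=
  le_antisymm (wnorm_mono fun a => (h a).le) (wnorm_mono fun a => (h a).ge)

lemma setLIntegral_count {N : ℕ} (B : Set (Fin N)) (g : Fin N → ℝ≥0∞) :
    ∫⁻ x in B, g x ∂Measure.count = ∑' b : B, g b := by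
  rw [lintegral_countable _ (B.to_countable)]
  simp [Measure.count_singleton]

lemma count_image_equiv {N : ℕ} (e : Fin N ≃ Fin N) (B : Set (Fin N)) :
    Measure.count (e '' B) = Measure.count B := by
  rw [Measure.count_apply .of_discrete, Measure.count_apply .of_discrete]
  rw [e.injective.encard_image]

lemma wnorm_comp_equiv {N : ℕ} (q : ℝ) (e : Fin N ≃ Fin N) (f : Fin N → ℝ) :
    wnorm q (Measure.count) (fun i => f (e i)) = wnorm q Measure.count f := by
  have key : ∀ (g : Fin N → ℝ) (e : Fin N ≃ Fin N) (B : Set (Fin N)),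
      (∫⁻ x in B, ENNReal.ofReal |g (e x)| ∂Measure.count) / Measure.count B ^ (1/q)
      = (∫⁻ x in e '' B, ENNReal.ofReal |g x| ∂Measure.count) / Measure.count (e '' B) ^ (1/q) := by
    intro g e B
    rw [count_image_equiv, setLIntegral_count, setLIntegral_count]
    congr 1
    exact (e.image B).tsum_eq fun c => ENNReal.ofReal |g (c : Fin N)|
  refine le_antisymm (iSup₂_le fun B hB => ?_) (iSup₂_le fun B hB => ?_)
  · rw [key f e B]
    refine le_iSup₂_of_le (e '' B) ?_ le_rfl
    refine ⟨.of_discrete, ?_, ?_⟩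
    · rw [count_image_equiv]; exact hB.2.1
    · rw [count_image_equiv]; exact hB.2.2
  · have := key f e (e ⁻¹' B)
    rw [Set.image_preimage_eq _ e.surjective] at this
    rw [← this]
    refine le_iSup₂_of_le (e ⁻¹' B) ⟨.of_discrete, ?_, ?_⟩ le_rfl
    · have h := count_image_equiv e (e ⁻¹' B)
      rw [Set.image_preimage_eq _ e.surjective] at h
      rw [← h]; exact hB.2.1
    · have h := count_image_equiv e (e ⁻¹' B)
      rw [Set.image_preimage_eq _ e.surjective] at h
      rw [← h]; exact hB.2.2

lemma wnorm_add_le {N : ℕ} (q : ℝ) (f g : Fin N → ℝ) :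
    wnorm q (Measure.count) (fun i => f i + g i) ≤
      wnorm q Measure.count f + wnorm q Measure.count g := by
  refine iSup₂_le fun B hB => ?_
  have h1 : (∫⁻ x in B, ENNReal.ofReal |f x + g x| ∂Measure.count) ≤
      (∫⁻ x in B, ENNReal.ofReal |f x| ∂Measure.count) +
      (∫⁻ x in B, ENNReal.ofReal |g x| ∂Measure.count) := by
    rw [← lintegral_add_left (Measurable.of_discrete)]
    refine lintegral_mono fun a => ?_
    rw [← ENNReal.ofReal_add (abs_nonneg _) (abs_nonneg _)]
    exact ENNReal.ofReal_le_ofReal (abs_add_le _ _)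
  calc (∫⁻ x in B, ENNReal.ofReal |f x + g x| ∂Measure.count) / Measure.count B ^ (1/q)
      ≤ ((∫⁻ x in B, ENNReal.ofReal |f x| ∂Measure.count) +
          (∫⁻ x in B, ENNReal.ofReal |g x| ∂Measure.count)) / Measure.count B ^ (1/q) :=
        ENNReal.div_le_div_right h1 _
    _ = (∫⁻ x in B, ENNReal.ofReal |f x| ∂Measure.count) / Measure.count B ^ (1/q) +
        (∫⁻ x in B, ENNReal.ofReal |g x| ∂Measure.count) / Measure.count B ^ (1/q) :=
        (ENNReal.div_add_div_same).symm
    _ ≤ _ := add_le_add (le_iSup₂_of_le B hB le_rfl) (le_iSup₂_of_le B hB le_rfl)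

end WnormLemmas

section XnormLemmas

variable {q : ℝ} {k : ℕ}

lemma Xnorm_comp_perm (x : XFull k) (π : ∀ m, Equiv.Perm (Fin (k * 2 ^ m))) :
    Xnorm q k (fun m i => x m (π m i)) = Xnorm q k x :=
  iSup_congr fun m => wnorm_comp_equiv q (π m) (x m)

lemma Xnorm_chi_le (A : (m : ℕ) → Set (Fin (k * 2 ^ m))) (x : XFull k) :
    Xnorm q k (chiMul A x) ≤ Xnorm q k x := by
  refine iSup_mono fun m => wnorm_mono fun a => ?_
  by_cases h : a ∈ A m
  · rw [chiMul, Set.indicator_of_mem h]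
  · rw [chiMul, Set.indicator_of_notMem h]
    simp [abs_nonneg]

lemma Xnorm_neg_smul (x : XFull k) : Xnorm q k ((-1 : ℝ) • x) = Xnorm q k x := by
  refine iSup_congr fun m => wnorm_congr fun a => ?_
  show |(-1 : ℝ) * x m a| = |x m a|
  simp [abs_mul]

lemma Xnorm_add_le (x y : XFull k) :
    Xnorm q k (x + y) ≤ Xnorm q k x + Xnorm q k y := by
  refine iSup_le fun m => ?_
  refine le_trans (wnorm_add_le q (x m) (y m)) ?_
  exact add_le_add (le_iSup (fun m => wnorm q Measure.count (x m)) m)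
    (le_iSup (fun m => wnorm q Measure.count (y m)) m)

end XnormLemmas

section BlockSwap

def bswap (b o i : ℕ) : ℕ := if i < b then i + o else if o ≤ i ∧ i < o + b then i - o else i

lemma bswap_invol {b o : ℕ} (h : b ≤ o ∨ o = 0) : Function.Involutive (bswap b o) := by
  intro i; rcases h with h | h <;> simp only [bswap] <;> split_ifs <;> omega

lemma bswap_lt {N b o : ℕ} (hbo : o + b ≤ N) {i : ℕ} (hi : i < N) : bswap b o i < N := by
  simp only [bswap]; split_ifs <;> omega

lemma bswap_mem {b o : ℕ} (h : b ≤ o ∨ o = 0) (i : ℕ) :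
    i < b ↔ (o ≤ bswap b o i ∧ bswap b o i < o + b) := by
  rcases h with h | h <;> simp only [bswap] <;> split_ifs <;> omega

noncomputable def bswapFin (N b o : ℕ) (hbo : o + b ≤ N) (h : b ≤ o ∨ o = 0) :
    Equiv.Perm (Fin N) :=
  Function.Involutive.toPerm (fun i => ⟨bswap b o i, bswap_lt hbo i.2⟩)
    (fun i => by ext; exact bswap_invol h i)

lemma bswapFin_coe {N b o : ℕ} (hbo : o + b ≤ N) (h : b ≤ o ∨ o = 0) (i : Fin N) :
    ((bswapFin N b o hbo h i : Fin N) : ℕ) = bswap b o i := rfl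

def offs (n j m : ℕ) : ℕ := if n ≤ m then j * 2 ^ (m - n) else j / 2 ^ (n - m)
def bsz (n m : ℕ) : ℕ := if n ≤ m then 2 ^ (m - n) else 1

lemma offs_zero (n m : ℕ) : offs n 0 m = 0 := by simp [offs]

lemma offs_add_bsz_le {k n m j : ℕ} (hj : j < k * 2 ^ n) :
    offs n j m + bsz n m ≤ k * 2 ^ m := by
  unfold offs bsz
  split_ifs with h
  · have : (j + 1) * 2 ^ (m - n) ≤ (k * 2 ^ n) * 2 ^ (m - n) :=
      Nat.mul_le_mul_right _ hj
    rw [mul_assoc, ← pow_add] at this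
    rw [Nat.add_sub_cancel' h, add_one_mul] at this
    omega
  · have hs : 0 < 2 ^ (n - m) := Nat.pow_pos (by norm_num)
    have : j / 2 ^ (n - m) < k * 2 ^ m := by
      rw [Nat.div_lt_iff_lt_mul hs, mul_assoc, ← pow_add,
        Nat.add_sub_cancel' (le_of_not_ge h)]
      exact hj
    omega

lemma bsz_le_offs_or {n j m : ℕ} : bsz n m ≤ offs n j m ∨ offs n j m = 0 := by
  unfold offs bsz
  split_ifs with h
  · rcases Nat.eq_zero_or_pos j with hj | hj
    · right; simp [hj]
    · left; calc 2 ^ (m - n) = 1 * 2 ^ (m-n) := (one_mul _).symm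
        _ ≤ j * 2 ^ (m-n) := Nat.mul_le_mul_right _ hj
  · rcases Nat.eq_zero_or_pos (j / 2 ^ (n - m)) with hj | hj
    · right; exact hj
    · left; exact hj

end BlockSwap

section AsetChar

lemma Aset_mem_iff_nat {k n : ℕ} (j : Fin (k * 2 ^ n)) {m : ℕ} (i : Fin (k * 2 ^ m)) :
    i ∈ Aset k n j m ↔
      ((i : ℕ) * 2 ^ n < ((j : ℕ) + 1) * 2 ^ m ∧ (j : ℕ) * 2 ^ m < ((i : ℕ) + 1) * 2 ^ n) := by
  have h2m : (0:ℝ) < 2 ^ m := by positivity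
  have h2n : (0:ℝ) < 2 ^ n := by positivity
  simp only [Aset, mem_setOf_eq, Set.Icc_inter_Icc, Real.volume_Icc]
  rw [ENNReal.ofReal_pos, sub_pos, lt_min_iff, max_lt_iff, max_lt_iff,
    div_lt_div_iff₀ h2m h2m, div_lt_div_iff₀ h2n h2m, div_lt_div_iff₀ h2m h2n,
    div_lt_div_iff₀ h2n h2n]
  constructor
  · rintro ⟨⟨-, h3⟩, h2, -⟩
    exact ⟨by exact_mod_cast h2, by exact_mod_cast h3⟩
  · rintro ⟨h1, h2⟩
    refine ⟨⟨by nlinarith, by exact_mod_cast h2⟩, by exact_mod_cast h1, by nlinarith⟩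

lemma Aset_mem_iff {k n : ℕ} (j : Fin (k * 2 ^ n)) {m : ℕ} (i : Fin (k * 2 ^ m)) :
    i ∈ Aset k n j m ↔
      (offs n (j : ℕ) m ≤ (i : ℕ) ∧ (i : ℕ) < offs n (j : ℕ) m + bsz n m) := by
  rw [Aset_mem_iff_nat]
  unfold offs bsz
  obtain ⟨i, hi⟩ := i
  obtain ⟨j, hj⟩ := j
  simp only [Fin.val_mk]
  clear hi hj
  split_ifs with h
  · have hP : 0 < 2 ^ n := Nat.pow_pos (by norm_num)
    have hm : 2 ^ m = 2 ^ (m - n) * 2 ^ n := by rw [← pow_add]; congr 1; omega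
    rw [hm]
    constructor
    · rintro ⟨h1, h2⟩
      rw [← mul_assoc] at h1 h2
      have h1' := Nat.lt_of_mul_lt_mul_right h1
      have h2' := Nat.lt_of_mul_lt_mul_right h2
      rw [add_one_mul] at h1'
      omega
    · rintro ⟨h1, h2⟩
      constructor
      · rw [← mul_assoc]
        refine (Nat.mul_lt_mul_right hP).2 ?_
        rw [add_one_mul]; omega
      · rw [← mul_assoc]
        refine (Nat.mul_lt_mul_right hP).2 ?_
        omega
  · have hS : 0 < 2 ^ (n - m) := Nat.pow_pos (by norm_num)
    have hQ : 0 < 2 ^ m := Nat.pow_pos (by norm_num)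
    have hn : 2 ^ n = 2 ^ (n - m) * 2 ^ m := by rw [← pow_add]; congr 1; omega
    rw [hn]
    constructor
    · rintro ⟨h1, h2⟩
      rw [← mul_assoc] at h1 h2
      have h1' := Nat.lt_of_mul_lt_mul_right h1
      have h2' := Nat.lt_of_mul_lt_mul_right h2
      have hle : i ≤ j / 2 ^ (n - m) :=
        (Nat.le_div_iff_mul_le hS).2 (by omega)
      have hlt : j / 2 ^ (n - m) < i + 1 :=
        (Nat.div_lt_iff_lt_mul hS).2 h2'
      omega
    · rintro ⟨h1, h2⟩
      have hi : i = j / 2 ^ (n - m) := by omega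
      subst hi
      have hA : (j / 2 ^ (n - m)) * 2 ^ (n - m) ≤ j := Nat.div_mul_le_self _ _
      have hB : j < (j / 2 ^ (n - m) + 1) * 2 ^ (n - m) :=
        (Nat.div_lt_iff_lt_mul hS).1 (Nat.lt_succ_self _)
      constructor
      · rw [← mul_assoc]
        refine (Nat.mul_lt_mul_right hQ).2 ?_
        omega
      · rw [← mul_assoc]
        refine (Nat.mul_lt_mul_right hQ).2 ?_
        omega

end AsetChar

section KeySubset

variable {q : ℝ} {k : ℕ} {Φ : XFull k → ℝ}

lemma key_subset
    (hΦadd : ∀ x y : XFull k, MemX q k x → MemX q k y → Φ (x + y) = Φ x + Φ y)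
    (hΦsmul : ∀ (c : ℝ) (x : XFull k), MemX q k x → Φ (c • x) = c * Φ x)
    (hΦZ : ∀ z ∈ Zset q k, Φ z = 0)
    (S T : (m : ℕ) → Set (Fin (k * 2 ^ m))) (π : ∀ m, Equiv.Perm (Fin (k * 2 ^ m)))
    (hST : ∀ m (i : Fin (k * 2 ^ m)), i ∈ S m ↔ π m i ∈ T m) :
    {r : ℝ | ∃ x : XFull k, MemX q k x ∧ Xnorm q k x ≤ 1 ∧ r = |Φ (chiMul T x)|} ⊆
    {r : ℝ | ∃ x : XFull k, MemX q k x ∧ Xnorm q k x ≤ 1 ∧ r = |Φ (chiMul S x)|} := by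
  rintro r ⟨x, hx, hx1, rfl⟩
  set y : XFull k := fun m i => x m (π m i) with hy
  have hXy : Xnorm q k y = Xnorm q k x := Xnorm_comp_perm x π
  have hchi : chiMul S y = fun m i => chiMul T x m (π m i) := by
    funext m i
    by_cases h : i ∈ S m
    · rw [chiMul, Set.indicator_of_mem h]
      show _ = (T m).indicator (x m) (π m i)
      rw [Set.indicator_of_mem ((hST m i).1 h)]
    · rw [chiMul, Set.indicator_of_notMem h]
      show _ = (T m).indicator (x m) (π m i)
      rw [Set.indicator_of_notMem (fun hc => h ((hST m i).2 hc))]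
  have hXS : Xnorm q k (chiMul S y) = Xnorm q k (chiMul T x) := by
    rw [hchi]; exact Xnorm_comp_perm (chiMul T x) π
  have hmemT : MemX q k (chiMul T x) := lt_of_le_of_lt (Xnorm_chi_le T x) hx
  have hmemS : MemX q k (chiMul S y) := by
    show Xnorm q k (chiMul S y) < ⊤
    rw [hXS]; exact hmemT
  have hmemNS : MemX q k ((-1 : ℝ) • chiMul S y) := by
    show Xnorm q k ((-1 : ℝ) • chiMul S y) < ⊤
    rw [Xnorm_neg_smul]; exact hmemS
  have hzmem : MemX q k (chiMul T x + (-1 : ℝ) • chiMul S y) := by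
    show Xnorm q k _ < ⊤
    refine lt_of_le_of_lt (Xnorm_add_le _ _) ?_
    exact ENNReal.add_lt_top.2 ⟨hmemT, hmemNS⟩
  have hsum : ∀ m, ∑ i, (chiMul T x + (-1 : ℝ) • chiMul S y) m i = 0 := by
    intro m
    have hs : ∑ i, chiMul S y m i = ∑ i, chiMul T x m i := by
      rw [hchi]
      exact Equiv.sum_comp (π m) (chiMul T x m)
    simp only [Pi.add_apply, Pi.smul_apply, smul_eq_mul, neg_one_mul]
    rw [Finset.sum_add_distrib, Finset.sum_neg_distrib, hs]
    ring
  have hZ : Φ (chiMul T x + (-1 : ℝ) • chiMul S y) = 0 :=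
    hΦZ _ ⟨hzmem, 0, fun m _ => hsum m⟩
  have hadd := hΦadd _ _ hmemT hmemNS
  have hsm := hΦsmul (-1) _ hmemS
  have heq : Φ (chiMul T x) = Φ (chiMul S y) := by
    rw [hadd, hsm] at hZ; linarith
  exact ⟨y, by show Xnorm q k y < ⊤; rw [hXy]; exact hx, hXy ▸ hx1, by rw [heq]⟩

end KeySubset

/-- Lemma 5 of the paper: all the functionals `Φ_{n,j}`, `1 ≤ j ≤ k·2^n`, have the same
norm as `Φ_{n,1}` (0-indexed: `j = 0`). -/
theorem Phi_nj_norms_equal (p q : ℝ) (hp : 1 < p) (hq : q = p / (p - 1))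
    (k : ℕ) (hk : 1 ≤ k)
    (Φ : XFull k → ℝ)
    (hΦadd : ∀ x y : XFull k, MemX q k x → MemX q k y → Φ (x + y) = Φ x + Φ y)
    (hΦsmul : ∀ (c : ℝ) (x : XFull k), MemX q k x → Φ (c • x) = c * Φ x)
    (hΦbd : ∀ x : XFull k, MemX q k x → ENNReal.ofReal |Φ x| ≤ Xnorm q k x)
    (hΦu : Φ (uElt p k) = 1)
    (hΦZ : ∀ z ∈ Zset q k, Φ z = 0)
    (n : ℕ) (j : Fin (k * 2 ^ n)) :
    sSup {r : ℝ | ∃ x : XFull k, MemX q k x ∧ Xnorm q k x ≤ 1 ∧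
        r = |Φ (chiMul (Aset k n j) x)|} =
    sSup {r : ℝ | ∃ x : XFull k, MemX q k x ∧ Xnorm q k x ≤ 1 ∧
        r = |Φ (chiMul (Aset k n ⟨0, by positivity⟩) x)|} := by
  set j0 : Fin (k * 2 ^ n) := ⟨0, by positivity⟩ with hj0def
  have hj0 : (j0 : ℕ) = 0 := rfl
  set π : ∀ m, Equiv.Perm (Fin (k * 2 ^ m)) := fun m =>
    bswapFin (k * 2 ^ m) (bsz n m) (offs n (j : ℕ) m) (offs_add_bsz_le j.2) bsz_le_offs_or
    with hπ
  have hST1 : ∀ m (i : Fin (k * 2 ^ m)), i ∈ Aset k n j0 m ↔ π m i ∈ Aset k n j m := by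
    intro m i
    rw [Aset_mem_iff, Aset_mem_iff, hj0, offs_zero]
    simp only [zero_add, Nat.zero_le, true_and]
    rw [hπ, bswapFin_coe]
    exact bswap_mem bsz_le_offs_or (i : ℕ)
  have hST2 : ∀ m (i : Fin (k * 2 ^ m)), i ∈ Aset k n j m ↔ π m i ∈ Aset k n j0 m := by
    intro m i
    rw [Aset_mem_iff, Aset_mem_iff, hj0, offs_zero]
    simp only [zero_add, Nat.zero_le, true_and]
    rw [hπ, bswapFin_coe]
    have h := bswap_mem (b := bsz n m) (o := offs n (j : ℕ) m) bsz_le_offs_or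
      (bswap (bsz n m) (offs n (j : ℕ) m) (i : ℕ))
    rw [bswap_invol bsz_le_offs_or (i : ℕ)] at h
    exact h.symm
  have h1 := key_subset hΦadd hΦsmul hΦZ (Aset k n j0) (Aset k n j) π hST1
  have h2 := key_subset hΦadd hΦsmul hΦZ (Aset k n j) (Aset k n j0) π hST2
  congr 1
  exact Set.Subset.antisymm h1 h2
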